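/- Let (X,μ) be a finite measure space, β ≥ 1, and f a measurable function with 0 < ‖f‖_{L^1} < ∞. Then ‖f‖_{L log^β L(X)} ≤ ∫_X |f| · log^β(e + |f|/‖f‖_{L^1(X)}) dμ, where ‖·‖_{L log^β L} is the Luxemburg norm associated to P_β(t) = t·log^β(e+t). -/

import Mathlib

open MeasureTheory

/-- Estimate of the `L log^β L` Luxemburg norm:
`‖f‖_{L log^β L} ≤ ∫ |f| log^β (e + |f|/‖f‖_{L^1})`. -/
theorem LlogL_norm_le {X : Type*} [MeasurableSpace X]
    (μ : Measure X) [IsFiniteMeasure μ] (β : ℝ) (hβ : 1 ≤ β)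
    (f : X → ℝ) (hf : Measurable f) (hf1 : Integrable f μ)
    (hpos : 0 < ∫ x, |f x| ∂μ) :
    ENNReal.ofReal (sInf {l : ℝ | 0 < l ∧
        ∫ x, (|f x| / l) * Real.log (Real.exp 1 + |f x| / l) ^ β ∂μ ≤ 1})
      ≤ ∫⁻ x, ENNReal.ofReal
          (|f x| * Real.log (Real.exp 1 + |f x| / ∫ y, |f y| ∂μ) ^ β) ∂μ := by
  set M : ℝ := ∫ y, |f y| ∂μ with hM
  set g : X → ℝ := fun x => |f x| * Real.log (Real.exp 1 + |f x| / M) ^ β with hg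
  have hβ0 : (0:ℝ) ≤ β := le_trans zero_le_one hβ
  -- pointwise facts
  have hlog1 : ∀ x, 1 ≤ Real.log (Real.exp 1 + |f x| / M) := by
    intro x
    have h1 : Real.exp 1 ≤ Real.exp 1 + |f x| / M :=
      le_add_of_nonneg_right (div_nonneg (abs_nonneg _) hpos.le)
    calc 1 = Real.log (Real.exp 1) := (Real.log_exp 1).symm
    _ ≤ _ := Real.log_le_log (Real.exp_pos 1) h1
  have hglb : ∀ x, |f x| ≤ g x := by
    intro x
    have : 1 ≤ Real.log (Real.exp 1 + |f x| / M) ^ β := by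
      calc (1:ℝ) = 1 ^ β := (Real.one_rpow β).symm
      _ ≤ _ := Real.rpow_le_rpow zero_le_one (hlog1 x) hβ0
    simp only [hg]
    nlinarith [abs_nonneg (f x)]
  have hgnn : ∀ x, 0 ≤ g x := fun x => le_trans (abs_nonneg _) (hglb x)
  have hgm : Measurable g := by
    apply (hf.abs).mul
    exact Measurable.pow (measurable_const.add (hf.abs.div_const M)).log measurable_const
  by_cases hint : Integrable g μ
  · -- main case
    set L : ℝ := ∫ x, g x ∂μ with hL
    have hML : M ≤ L := integral_mono hf1.abs hint hglb
    have hLpos : 0 < L := lt_of_lt_of_le hpos hML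
    have hmem : L ∈ {l : ℝ | 0 < l ∧
        ∫ x, (|f x| / l) * Real.log (Real.exp 1 + |f x| / l) ^ β ∂μ ≤ 1} := by
      refine ⟨hLpos, ?_⟩
      have hptw : ∀ x, (|f x| / L) * Real.log (Real.exp 1 + |f x| / L) ^ β ≤ g x / L := by
        intro x
        have hdiv : |f x| / L ≤ |f x| / M :=
          div_le_div_of_nonneg_left (abs_nonneg _) hpos hML
        have hlogle : Real.log (Real.exp 1 + |f x| / L) ≤
            Real.log (Real.exp 1 + |f x| / M) :=
          Real.log_le_log (by positivity) (by linarith)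
        have hlognn : 0 ≤ Real.log (Real.exp 1 + |f x| / L) := by
          have h1 : Real.exp 1 ≤ Real.exp 1 + |f x| / L :=
            le_add_of_nonneg_right (div_nonneg (abs_nonneg _) hLpos.le)
          calc (0:ℝ) ≤ 1 := zero_le_one
          _ = Real.log (Real.exp 1) := (Real.log_exp 1).symm
          _ ≤ _ := Real.log_le_log (Real.exp_pos 1) h1
        have hpow : Real.log (Real.exp 1 + |f x| / L) ^ β ≤
            Real.log (Real.exp 1 + |f x| / M) ^ β :=
          Real.rpow_le_rpow hlognn hlogle hβ0
        have := mul_le_mul_of_nonneg_left hpow (div_nonneg (abs_nonneg (f x)) hLpos.le)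
        calc (|f x| / L) * Real.log (Real.exp 1 + |f x| / L) ^ β
            ≤ (|f x| / L) * Real.log (Real.exp 1 + |f x| / M) ^ β := this
          _ = g x / L := by rw [hg]; ring
      have hintdom : Integrable (fun x => g x / L) μ := hint.div_const L
      have hle : ∫ x, (|f x| / L) * Real.log (Real.exp 1 + |f x| / L) ^ β ∂μ
          ≤ ∫ x, g x / L ∂μ := by
        refine integral_mono_of_nonneg ?_ hintdom (Filter.Eventually.of_forall hptw)
        refine Filter.Eventually.of_forall fun x => ?_
        have hlognn : 0 ≤ Real.log (Real.exp 1 + |f x| / L) := by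
          have h1 : Real.exp 1 ≤ Real.exp 1 + |f x| / L :=
            le_add_of_nonneg_right (div_nonneg (abs_nonneg _) hLpos.le)
          calc (0:ℝ) ≤ 1 := zero_le_one
          _ = Real.log (Real.exp 1) := (Real.log_exp 1).symm
          _ ≤ _ := Real.log_le_log (Real.exp_pos 1) h1
        positivity
      have : ∫ x, g x / L ∂μ = 1 := by
        rw [integral_div, ← hL, div_self hLpos.ne']
      linarith
    have hbdd : BddBelow {l : ℝ | 0 < l ∧
        ∫ x, (|f x| / l) * Real.log (Real.exp 1 + |f x| / l) ^ β ∂μ ≤ 1} :=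
      ⟨0, fun l hl => hl.1.le⟩
    have hinf : sInf {l : ℝ | 0 < l ∧
        ∫ x, (|f x| / l) * Real.log (Real.exp 1 + |f x| / l) ^ β ∂μ ≤ 1} ≤ L :=
      csInf_le hbdd hmem
    calc ENNReal.ofReal _ ≤ ENNReal.ofReal L := ENNReal.ofReal_le_ofReal hinf
      _ = ∫⁻ x, ENNReal.ofReal (g x) ∂μ :=
        ofReal_integral_eq_lintegral_ofReal hint (Filter.Eventually.of_forall hgnn)
  · -- g not integrable: RHS is ⊤
    have htop : ∫⁻ x, ENNReal.ofReal (g x) ∂μ = ⊤ := by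
      by_contra h
      apply hint
      refine ⟨hgm.aestronglyMeasurable, ?_⟩
      rw [HasFiniteIntegral]
      have : ∀ x, ‖g x‖ₑ = ENNReal.ofReal (g x) := by
        intro x
        rw [← ofReal_norm, Real.norm_of_nonneg (hgnn x)]
      simp only [this]
      exact lt_top_iff_ne_top.mpr h
    rw [htop]; exact le_top
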